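/- Let l ≥ 1 and b be integers. The l × l matrix P_b^{(l)} with entries (P_b^{(l)})_{r,c} = C(b + 2(r-1), c-1) for 1 ≤ r, c ≤ l (binomial coefficients, rows indexed by b, b+2, ..., b+2l-2, columns by 0, 1, ..., l-1) has determinant 2^{C(l,2)}. -/

import Mathlib

/-- The generalized binomial coefficient `C(n, r) = n(n-1)⋯(n-r+1)/r!` for an
integer `n` and a natural number `r`, with values in `ℚ`. -/
noncomputable def gchoose (n : ℤ) (r : ℕ) : ℚ :=
  (∏ j ∈ Finset.range r, ((n : ℚ) - (j : ℚ))) / (r.factorial : ℚ)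

lemma descPochhammer_eval_eq_prod (r : ℕ) (x : ℚ) :
    (descPochhammer ℚ r).eval x = ∏ j ∈ Finset.range r, (x - (j : ℚ)) := by
  induction r with
  | zero => simp
  | succ n ih => rw [descPochhammer_succ_eval, ih, Finset.prod_range_succ]

lemma superFactorial_ne_zero (n : ℕ) : Nat.superFactorial n ≠ 0 := by
  induction n with
  | zero => simp
  | succ k ih => simp [Nat.superFactorial_succ, Nat.factorial_ne_zero, ih]

/-- For integers `l ≥ 1` and `b`, the `l × l` matrix with `(r,c)`-entry
`C(b + 2(r-1), c-1)` (rows indexed by `b, b+2, …, b+2l-2`, columns by `0, …, l-1`)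
has determinant `2^{C(l,2)}`. -/
theorem det_pascal_like_matrix (l : ℕ) (hl : 1 ≤ l) (b : ℤ) :
    (Matrix.of fun r c : Fin l => gchoose (b + 2 * (r : ℤ)) (c : ℕ)).det
      = 2 ^ l.choose 2 := by
  classical
  obtain ⟨n, rfl⟩ : ∃ n, l = n + 1 := ⟨l - 1, (Nat.succ_pred_eq_of_pos hl).symm⟩
  set l := n + 1
  set v : Fin l → ℚ := fun r => (b : ℚ) + 2 * (r : ℕ) with hv
  have hM : (Matrix.of fun r c : Fin l => gchoose (b + 2 * (r : ℤ)) (c : ℕ))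
      = Matrix.of fun r c : Fin l =>
        ((c : ℕ).factorial : ℚ)⁻¹ * (descPochhammer ℚ (c : ℕ)).eval (v r) := by
    ext r c
    simp only [Matrix.of_apply, gchoose, descPochhammer_eval_eq_prod, hv]
    rw [div_eq_inv_mul]
    congr 1
    refine Finset.prod_congr rfl fun x _ => ?_
    push_cast
    ring
  rw [hM, Matrix.det_mul_row (v := fun c : Fin l => ((c : ℕ).factorial : ℚ)⁻¹)
    (A := fun r c : Fin l => (descPochhammer ℚ (c : ℕ)).eval (v r))]
  have hdet : Matrix.det (fun r c : Fin l =>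
      (descPochhammer ℚ (c : ℕ)).eval (v r)) = (Matrix.vandermonde v).det :=
    (Matrix.det_eval_matrixOfPolynomials_eq_det_vandermonde v
      (fun c => descPochhammer ℚ (c : ℕ)) (fun c => descPochhammer_natDegree ℚ c)
      (fun c => monic_descPochhammer ℚ c)).symm
  rw [hdet, Matrix.det_vandermonde]
  have hstep : ∀ i : Fin l, ∏ j ∈ Finset.Ioi i, (v j - v i)
      = 2 ^ (Finset.Ioi i).card * ∏ j ∈ Finset.Ioi i, (((j : ℕ) : ℚ) - ((i : ℕ) : ℚ)) := by
    intro i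
    rw [← Finset.prod_const (2 : ℚ), ← Finset.prod_mul_distrib]
    refine Finset.prod_congr rfl fun j _ => ?_
    simp only [hv]; ring
  rw [Finset.prod_congr rfl (fun i _ => hstep i), Finset.prod_mul_distrib,
    Finset.prod_pow_eq_pow_sum]
  have hcard : ∑ i : Fin l, (Finset.Ioi i).card = l.choose 2 := by
    simp only [Fin.card_Ioi]
    rw [Fin.sum_univ_eq_sum_range (fun i => l - 1 - i),
      Finset.sum_range_reflect (fun i => i) l, Finset.sum_range_id, Nat.choose_two_right]
  have hvand : ∏ i : Fin l, ∏ j ∈ Finset.Ioi i, (((j : ℕ) : ℚ) - ((i : ℕ) : ℚ))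
      = (Nat.superFactorial n : ℚ) := by
    have h := Matrix.det_vandermonde_id_eq_superFactorial (R := ℚ) n
    rw [Matrix.det_vandermonde] at h
    exact h
  have hsf : ∏ i : Fin l, (((i : ℕ).factorial : ℚ))⁻¹ = ((Nat.superFactorial n : ℚ))⁻¹ := by
    rw [Finset.prod_inv_distrib]
    congr 1
    rw [Fin.prod_univ_eq_prod_range (fun i => ((i.factorial : ℚ)))]
    rw [← Nat.cast_prod, Nat.prod_range_succ_factorial]
  rw [hcard, hvand, hsf]
  have hne : ((Nat.superFactorial n : ℚ)) ≠ 0 := by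
    exact_mod_cast superFactorial_ne_zero n
  field_simp
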